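/- The following two statements are equivalent: (1) for all finite simple graphs G and H and all vertices x ∈ V(G), y ∈ V(H), π(G × H, (x, y)) ≤ π(G, x) · π(H, y); (2) for all finite simple graphs G and H, all nonnegative integers a and b, and all vertices x ∈ V(G), y ∈ V(H), π_{2^{a+b}}(G × H, (x, y)) ≤ π_{2^a}(G, x) · π_{2^b}(H, y). -/

import Mathlib

open scoped BigOperators

/-- A single pebbling move on a simple graph: remove two pebbles from `u`
and add one pebble on an adjacent vertex `v`. -/
def PebMove {V : Type*} [DecidableEq V] (G : SimpleGraph V) (D D' : V → ℕ) : Prop :=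
  ∃ u v, G.Adj u v ∧ 2 ≤ D u ∧
    D' = fun w => if w = u then D u - 2 else if w = v then D v + 1 else D w

/-- `D'` is reachable from `D`: some sequence of pebbling moves starting at `D`
produces a distribution containing `D'`. -/
def Reaches {V : Type*} [DecidableEq V] (G : SimpleGraph V) (D D' : V → ℕ) : Prop :=
  ∃ D'', Relation.ReflTransGen (PebMove G) D D'' ∧ ∀ v, D' v ≤ D'' v

/-- Total number of pebbles of a distribution. -/
def pebTotal {V : Type*} [Fintype V] (D : V → ℕ) : ℕ := ∑ v, D v

/-- The pebbling number of a set `S` of target distributions on `G`: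
the least `N` (possibly `∞`) such that every member of `S` is reachable from
every distribution with at least `N` pebbles in total. -/
noncomputable def pebSet {V : Type*} [Fintype V] [DecidableEq V] (G : SimpleGraph V)
    (S : Set (V → ℕ)) : ℕ∞ :=
  sInf {N : ℕ∞ | ∀ D₀ : V → ℕ, N ≤ (pebTotal D₀ : ℕ∞) → ∀ D ∈ S, Reaches G D₀ D}

/-- The pebbling number of a single target distribution. -/
noncomputable def peb {V : Type*} [Fintype V] [DecidableEq V] (G : SimpleGraph V)
    (D : V → ℕ) : ℕ∞ :=
  pebSet G {D}

/-- The distribution with `t` pebbles on `v` and none elsewhere. -/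
def unitDist {V : Type*} [DecidableEq V] (t : ℕ) (v : V) : V → ℕ :=
  fun w => if w = v then t else 0


set_option linter.unnecessarySeqFocus false
set_option linter.unusedSectionVars false

section Basic

variable {V : Type*} [DecidableEq V] {G : SimpleGraph V}

lemma reaches_of_le {D T : V → ℕ} (h : ∀ v, T v ≤ D v) : Reaches G D T :=
  ⟨D, .refl, h⟩

lemma rtg_add {D E : V → ℕ} (h : Relation.ReflTransGen (PebMove G) D E) (B : V → ℕ) :
    Relation.ReflTransGen (PebMove G) (fun w => D w + B w) (fun w => E w + B w) := by
  induction h with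
  | refl => exact .refl
  | tail hs hstep ih =>
    obtain ⟨u, v, hadj, h2, rfl⟩ := hstep
    refine ih.tail ⟨u, v, hadj, le_trans h2 (Nat.le_add_right _ _), ?_⟩
    funext w
    by_cases hw : w = u
    · subst hw; simp; omega
    · by_cases hw2 : w = v
      · subst hw2; simp [hw]; omega
      · simp [hw, hw2]

lemma rtg_le_start {D D' E : V → ℕ} (hle : ∀ v, D v ≤ D' v)
    (h : Relation.ReflTransGen (PebMove G) D E) :
    ∃ E', Relation.ReflTransGen (PebMove G) D' E' ∧ ∀ v, E v ≤ E' v := by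
  refine ⟨fun w => E w + (D' w - D w), ?_, fun v => Nat.le_add_right _ _⟩
  have h2 := rtg_add h (fun w => D' w - D w)
  have heq : (fun w => D w + (D' w - D w)) = D' := by
    funext w; have := hle w; omega
  rwa [heq] at h2

lemma reaches_trans {D E T : V → ℕ} (h1 : Reaches G D E) (h2 : Reaches G E T) :
    Reaches G D T := by
  obtain ⟨E1, hr1, hle1⟩ := h1
  obtain ⟨T1, hr2, hle2⟩ := h2
  obtain ⟨T2, hr3, hle3⟩ := rtg_le_start hle1 hr2
  exact ⟨T2, hr1.trans hr3, fun v => le_trans (hle2 v) (hle3 v)⟩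

lemma reaches_mono_target {D T T' : V → ℕ} (h : Reaches G D T) (hle : ∀ v, T' v ≤ T v) :
    Reaches G D T' := by
  obtain ⟨E, hr, hle2⟩ := h
  exact ⟨E, hr, fun v => le_trans (hle v) (hle2 v)⟩

lemma pebTotal_move [Fintype V] {D D' : V → ℕ} (h : PebMove G D D') :
    pebTotal D' + 1 = pebTotal D := by
  obtain ⟨u, v, hadj, h2, rfl⟩ := h
  have hne : u ≠ v := hadj.ne
  have key : ∀ w, (if w = u then D u - 2 else if w = v then D v + 1 else D w)
      + (if w = u then 2 else 0) = D w + (if w = v then 1 else 0) := by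
    intro w
    by_cases hw : w = u
    · subst hw; simp [hne]; omega
    · by_cases hw2 : w = v
      · subst hw2; simp [hw]
      · simp [hw, hw2]
  have h1 : (∑ w : V, (if w = u then (2:ℕ) else 0)) = 2 := by
    simp [Finset.sum_ite_eq']
  have h2' : (∑ w : V, (if w = v then (1:ℕ) else 0)) = 1 := by
    simp [Finset.sum_ite_eq']
  have hsum : pebTotal (fun w => if w = u then D u - 2 else if w = v then D v + 1 else D w) + 2
      = pebTotal D + 1 := by
    unfold pebTotal
    calc (∑ w : V, (if w = u then D u - 2 else if w = v then D v + 1 else D w)) + 2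
        = (∑ w : V, (if w = u then D u - 2 else if w = v then D v + 1 else D w))
          + ∑ w : V, (if w = u then (2:ℕ) else 0) := by rw [h1]
      _ = ∑ w : V, ((if w = u then D u - 2 else if w = v then D v + 1 else D w)
          + (if w = u then (2:ℕ) else 0)) := (Finset.sum_add_distrib).symm
      _ = ∑ w : V, (D w + (if w = v then (1:ℕ) else 0)) :=
          Finset.sum_congr rfl (fun w _ => key w)
      _ = (∑ w : V, D w) + 1 := by rw [Finset.sum_add_distrib, h2']
  omega

lemma rtg_total_le [Fintype V] {D E : V → ℕ} (h : Relation.ReflTransGen (PebMove G) D E) :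
    pebTotal E ≤ pebTotal D := by
  induction h with
  | refl => exact le_refl _
  | tail hs hstep ih => have := pebTotal_move hstep; omega

lemma rtg_moves {u v : V} (hadj : G.Adj u v) (n : ℕ) :
    ∀ D : V → ℕ, 2 * n ≤ D u →
    Relation.ReflTransGen (PebMove G) D
      (fun w => if w = u then D u - 2 * n else if w = v then D v + n else D w) := by
  have hne : u ≠ v := hadj.ne
  induction n with
  | zero =>
    intro D _
    have heq : (fun w => if w = u then D u - 2 * 0 else if w = v then D v + 0 else D w) = D := by
      funext w
      by_cases hw : w = u
      · subst hw; simp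
      · by_cases hw2 : w = v
        · subst hw2; simp [hw]
        · simp [hw, hw2]
    rw [heq]
  | succ n ih =>
    intro D hD
    have hstep : PebMove G D (fun w => if w = u then D u - 2 else if w = v then D v + 1 else D w) :=
      ⟨u, v, hadj, by omega, rfl⟩
    set D1 := fun w => if w = u then D u - 2 else if w = v then D v + 1 else D w with hD1
    have h1u : D1 u = D u - 2 := by simp [hD1]
    have h1v : D1 v = D v + 1 := by simp [hD1, hne.symm]
    have hrest := ih D1 (by rw [h1u]; omega)
    refine Relation.ReflTransGen.head hstep ?_
    have heq : (fun w => if w = u then D1 u - 2 * n else if w = v then D1 v + n else D1 w)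
        = (fun w => if w = u then D u - 2 * (n+1) else if w = v then D v + (n+1) else D w) := by
      funext w
      by_cases hw : w = u
      · subst hw; simp [h1u]; omega
      · by_cases hw2 : w = v
        · subst hw2; simp [hw, h1v]; omega
        · simp [hD1, hw, hw2]
    rwa [heq] at hrest

lemma rtg_delete {D E : V → ℕ} {v0 : V}
    (h : Relation.ReflTransGen (PebMove G) (fun w => D w + (if w = v0 then 1 else 0)) E) :
    ∃ w F, Relation.ReflTransGen (PebMove G) D F ∧
      ∀ g, E g ≤ F g + (if g = w then 1 else 0) := by
  induction h with
  | refl =>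
    exact ⟨v0, D, .refl, fun g => le_refl _⟩
  | tail hs hstep ih =>
    obtain ⟨w, F, hF, hle⟩ := ih
    obtain ⟨u, v, hadj, h2, rfl⟩ := hstep
    rename_i c _
    have hne : u ≠ v := hadj.ne
    by_cases hFu : 2 ≤ F u
    · refine ⟨w, fun g => if g = u then F u - 2 else if g = v then F v + 1 else F g,
        hF.tail ⟨u, v, hadj, hFu, rfl⟩, ?_⟩
      intro g
      rcases eq_or_ne g u with rfl | hgu
      · have h3 := hle g
        rcases eq_or_ne g w with rfl | huw
        · simp at h3 ⊢ <;> omega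
        · simp [huw] at h3 ⊢ <;> omega
      · rcases eq_or_ne g v with rfl | hgv
        · have h3 := hle g
          rcases eq_or_ne g w with rfl | hvw
          · simp [hgu] at h3 ⊢ <;> omega
          · simp [hgu, hvw] at h3 ⊢ <;> omega
        · have h3 := hle g
          rcases eq_or_ne g w with rfl | hgw
          · simp [hgu, hgv] at h3 ⊢ <;> omega
          · simp [hgu, hgv, hgw] at h3 ⊢ <;> omega
    · have h4 := hle u
      have hwu : u = w := by
        by_contra hc
        simp only [if_neg hc] at h4
        omega
      subst hwu
      refine ⟨v, F, hF, ?_⟩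
      intro g
      rcases eq_or_ne g u with rfl | hgu
      · have h3 := hle g
        simp at h3
        simp [hne]
        omega
      · rcases eq_or_ne g v with rfl | hgv
        · have h3 := hle g
          simp [hgu] at h3 ⊢
          omega
        · have h3 := hle g
          simp [hgu, hgv] at h3 ⊢
          omega

end Basic

section Peb

variable {V : Type*} [Fintype V] [DecidableEq V] {G : SimpleGraph V}

lemma pebTotal_unitDist (t : ℕ) (x : V) : pebTotal (unitDist t x) = t := by
  simp [pebTotal, unitDist, Finset.sum_ite_eq']

lemma peb_le_intro {T : V → ℕ} {r : ℕ∞}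
    (h : ∀ D : V → ℕ, r ≤ (pebTotal D : ℕ∞) → Reaches G D T) : peb G T ≤ r := by
  apply sInf_le
  intro D₀ hD₀ T' hT'
  rw [Set.mem_singleton_iff] at hT'
  subst hT'
  exact h D₀ hD₀

lemma peb_spec {T D : V → ℕ} (h : peb G T ≤ (pebTotal D : ℕ∞)) : Reaches G D T := by
  by_contra hc
  have hub : ∀ N ∈ {N : ℕ∞ | ∀ D₀ : V → ℕ, N ≤ (pebTotal D₀ : ℕ∞) →
      ∀ T' ∈ ({T} : Set (V → ℕ)), Reaches G D₀ T'},
      (pebTotal D : ℕ∞) + 1 ≤ N := by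
    intro N hN
    rcases le_or_gt N (pebTotal D : ℕ∞) with hle | hlt
    · exact absurd (hN D hle T rfl) hc
    · exact (ENat.add_one_le_iff (by simp)).mpr hlt
  have h2 : (pebTotal D : ℕ∞) + 1 ≤ peb G T := le_sInf hub
  have h3 : (pebTotal D : ℕ∞) + 1 ≤ (pebTotal D : ℕ∞) := le_trans h2 h
  rw [← Nat.cast_one, ← Nat.cast_add] at h3
  have h4 : pebTotal D + 1 ≤ pebTotal D := by exact_mod_cast h3
  omega

lemma peb_add_one_le {m : ℕ} {x : V} :
    peb G (unitDist m x) + 1 ≤ peb G (unitDist (m + 2) x) := by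
  apply le_sInf
  intro N hN
  cases N with
  | top => exact le_top
  | coe n =>
    have hn1 : 1 ≤ n := by
      by_contra h0
      have hn0 : n = 0 := by omega
      subst hn0
      have hreach := hN (fun _ => 0) (by simp) (unitDist (m + 2) x) rfl
      obtain ⟨E, hrtg, hE⟩ := hreach
      have h1 : pebTotal E ≤ pebTotal (fun _ : V => (0:ℕ)) := rtg_total_le hrtg
      have h2 : m + 2 ≤ E x := by have := hE x; simpa [unitDist] using this
      have h3 : E x ≤ pebTotal E := by
        apply Finset.single_le_sum (f := fun v => E v) (fun i _ => Nat.zero_le _)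
          (Finset.mem_univ x)
      have h1' : pebTotal E ≤ 0 := le_trans h1 (by simp [pebTotal])
      omega
    have hmle : peb G (unitDist m x) ≤ ((n - 1 : ℕ) : ℕ∞) := by
      apply peb_le_intro
      intro D hD
      have hcast : (n - 1 : ℕ) ≤ pebTotal D := by exact_mod_cast hD
      have hplus : (n : ℕ∞) ≤ (pebTotal (fun w => D w + (if w = x then 1 else 0)) : ℕ∞) := by
        have ht : pebTotal (fun w => D w + (if w = x then 1 else 0)) = pebTotal D + 1 := by
          unfold pebTotal
          rw [Finset.sum_add_distrib]
          simp [Finset.sum_ite_eq']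
        rw [ht]
        exact_mod_cast (by omega : n ≤ pebTotal D + 1)
      have hreach := hN _ hplus (unitDist (m + 2) x) rfl
      obtain ⟨E, hrtg, hE⟩ := hreach
      obtain ⟨w, F, hF, hle⟩ := rtg_delete (v0 := x) hrtg
      refine ⟨F, hF, ?_⟩
      intro v
      have h1 := hE x
      have h2 := hle x
      have h4 := hE v
      rcases eq_or_ne v x with rfl | hvx
      · rcases eq_or_ne v w with rfl | hvw
        · simp [unitDist] at h1 h2 ⊢
          omega
        · simp [unitDist, hvw] at h1 h2 ⊢
          omega
      · simp [unitDist, hvx]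
    calc peb G (unitDist m x) + 1 ≤ ((n - 1 : ℕ) : ℕ∞) + 1 := add_le_add_left hmle 1
      _ = ((n - 1 + 1 : ℕ) : ℕ∞) := by push_cast; ring
      _ = ((n : ℕ) : ℕ∞) := by congr 1; omega

lemma peb_add_le {m : ℕ} {x : V} (c : ℕ) :
    peb G (unitDist m x) + (c : ℕ∞) ≤ peb G (unitDist (m + 2 * c) x) := by
  induction c with
  | zero => simp
  | succ c ih =>
    have h2 : peb G (unitDist (m + 2 * c) x) + 1 ≤ peb G (unitDist (m + 2 * c + 2) x) :=
      peb_add_one_le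
    have heq : m + 2 * c + 2 = m + 2 * (c + 1) := by omega
    rw [heq] at h2
    calc peb G (unitDist m x) + ((c + 1 : ℕ) : ℕ∞)
        = (peb G (unitDist m x) + (c : ℕ∞)) + 1 := by push_cast; rw [add_assoc]
      _ ≤ peb G (unitDist (m + 2 * c) x) + 1 := add_le_add_left ih 1
      _ ≤ peb G (unitDist (m + 2 * (c + 1)) x) := h2

end Peb

section Push

def pushD {V V' : Type*} (ρ : V' → Option V) (D : V → ℕ) : V' → ℕ :=
  fun v' => (ρ v').elim 0 D

lemma rtg_push {V V' : Type*} [DecidableEq V] [DecidableEq V']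
    {G : SimpleGraph V} {G' : SimpleGraph V'} (ι : V → V') (ρ : V' → Option V)
    (hri : ∀ u, ρ (ι u) = some u)
    (hir : ∀ v' u, ρ v' = some u → ι u = v')
    (hadj : ∀ u v, G.Adj u v → G'.Adj (ι u) (ι v))
    {D E : V → ℕ} (h : Relation.ReflTransGen (PebMove G) D E) :
    Relation.ReflTransGen (PebMove G') (pushD ρ D) (pushD ρ E) := by
  have hinj : Function.Injective ι := by
    intro a b hab
    have h1 := hri a
    rw [hab, hri b] at h1
    exact (Option.some.injEq _ _ ▸ h1).symm
  induction h with
  | refl => exact .refl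
  | @tail c d hs hstep ih =>
    obtain ⟨u, v, huv, h2, rfl⟩ := hstep
    refine ih.tail ⟨ι u, ι v, hadj _ _ huv, ?_, ?_⟩
    · show 2 ≤ (ρ (ι u)).elim 0 c
      rw [hri u]
      exact h2
    · funext w'
      have hneuv : u ≠ v := huv.ne
      rcases hw : ρ w' with _ | u''
      · have h1 : w' ≠ ι u := fun e => by rw [e, hri] at hw; cases hw
        have h2' : w' ≠ ι v := fun e => by rw [e, hri] at hw; cases hw
        simp [pushD, hw, h1, h2']
      · have hw' : ι u'' = w' := hir _ _ hw
        subst hw'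
        rcases eq_or_ne u'' u with rfl | hu
        · simp [pushD, hw, hri]
        · have hne1 : ι u'' ≠ ι u := fun e => hu (hinj e)
          rcases eq_or_ne u'' v with rfl | hv
          · simp [pushD, hw, hri, hne1, Ne.symm hneuv]
          · have hne2 : ι u'' ≠ ι v := fun e => hv (hinj e)
            simp [pushD, hw, hu, hv, hne1, hne2]

end Push

section PathExt

variable {V : Type*}

def pathExt (G : SimpleGraph V) (x : V) (a : ℕ) : SimpleGraph (V ⊕ Fin a) where
  Adj p q :=
    match p, q with
    | Sum.inl u, Sum.inl v => G.Adj u v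
    | Sum.inl u, Sum.inr i => u = x ∧ (i : ℕ) = 0
    | Sum.inr i, Sum.inl v => v = x ∧ (i : ℕ) = 0
    | Sum.inr i, Sum.inr j => (i : ℕ) + 1 = j ∨ (j : ℕ) + 1 = i
  symm := by
    refine ⟨?_⟩
    rintro (u | i) (v | j) h
    · exact G.adj_symm h
    · exact h
    · exact h
    · exact h.symm
  loopless := by
    refine ⟨?_⟩
    rintro (u | i) h
    · exact G.irrefl h
    · rcases h with h | h <;> omega

def wv (x : V) (a k : ℕ) : V ⊕ Fin a :=
  if h : 1 ≤ k ∧ k ≤ a then Sum.inr ⟨k - 1, by omega⟩ else Sum.inl x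

lemma wv_zero (x : V) (a : ℕ) : wv x a 0 = Sum.inl x := by
  simp [wv]

lemma wv_succ (x : V) {a k : ℕ} (h : k < a) : wv x a (k + 1) = Sum.inr ⟨k, h⟩ := by
  rw [wv, dif_pos ⟨by omega, by omega⟩]
  simp only [Sum.inr.injEq, Fin.mk.injEq]
  omega

lemma wv_adj {G : SimpleGraph V} {x : V} {a k : ℕ} (hk : k < a) :
    (pathExt G x a).Adj (wv x a k) (wv x a (k + 1)) := by
  rw [wv_succ x hk]
  cases k with
  | zero =>
    rw [wv_zero]
    show x = x ∧ ((⟨0, hk⟩ : Fin a) : ℕ) = 0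
    exact ⟨rfl, rfl⟩
  | succ k =>
    rw [wv_succ x (by omega : k < a)]
    show ((⟨k, _⟩ : Fin a) : ℕ) + 1 = ((⟨k + 1, hk⟩ : Fin a) : ℕ) ∨ _
    exact Or.inl rfl

end PathExt

section Qprime

variable {V : Type*} [Fintype V] [DecidableEq V]

lemma Qprime (G : SimpleGraph V) (x : V) (a : ℕ) :
    ∀ k, k ≤ a → ∀ (t : ℕ) (D : (V ⊕ Fin a) → ℕ),
      (∀ j : Fin a, k ≤ (j : ℕ) → D (Sum.inr j) = 0) →
      peb G (unitDist (t * 2 ^ k) x) ≤ (pebTotal D : ℕ∞) →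
      Reaches (pathExt G x a) D (unitDist t (wv x a k)) := by
  intro k
  induction k with
  | zero =>
    intro _ t D hsupp hpeb
    set D₀ : V → ℕ := fun u => D (Sum.inl u) with hD₀
    have htot : pebTotal D = pebTotal D₀ := by
      unfold pebTotal
      rw [Fintype.sum_sum_type]
      have : ∀ j : Fin a, D (Sum.inr j) = 0 := fun j => hsupp j (Nat.zero_le _)
      simp [this, hD₀]
    have hpeb' : peb G (unitDist t x) ≤ (pebTotal D₀ : ℕ∞) := by
      rw [← htot]
      simpa using hpeb
    obtain ⟨E, hrtg, hE⟩ := peb_spec hpeb'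
    -- push along inl
    set ρ : (V ⊕ Fin a) → Option V := fun p => match p with
      | Sum.inl u => some u
      | Sum.inr _ => none with hρ
    have hpush := rtg_push (G' := pathExt G x a) Sum.inl ρ (fun u => rfl)
      (by rintro (u | i) w h
          · simp only [hρ] at h
            exact congrArg Sum.inl (Option.some.inj h).symm
          · simp [hρ] at h)
      (fun u v h => h) hrtg
    have hstart : pushD ρ D₀ = D := by
      funext p
      rcases p with u | j
      · rfl
      · show (0:ℕ) = D (Sum.inr j)
        exact (hsupp j (Nat.zero_le _)).symm
    rw [hstart] at hpush
    refine ⟨pushD ρ E, hpush, ?_⟩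
    intro p
    rcases p with u | j
    · rcases eq_or_ne u x with rfl | hux
      · rw [wv_zero]
        show unitDist t (Sum.inl u) (Sum.inl u) ≤ E u
        simp only [unitDist, if_pos rfl]
        have := hE u
        simpa [unitDist] using this
      · rw [wv_zero]
        show unitDist t (Sum.inl x) (Sum.inl u) ≤ E u
        simp [unitDist, hux]
    · rw [wv_zero]
      show unitDist t (Sum.inl x) (Sum.inr j) ≤ _
      simp [unitDist]
  | succ k ih =>
    intro hk1 t D hsupp hpeb
    have hka : k < a := by omega
    set tip := wv x a (k + 1) with htip
    have htipval : tip = Sum.inr ⟨k, hka⟩ := wv_succ x hka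
    set s0 := D tip with hs0
    by_cases hst : t ≤ s0
    · apply reaches_of_le
      intro v
      rcases eq_or_ne v tip with rfl | hv
      · have h6 : t ≤ D tip := le_trans hst (le_of_eq hs0)
        simp [unitDist]
        omega
      · simp [unitDist, hv]
    · push_neg at hst
      set D₀ : (V ⊕ Fin a) → ℕ := fun p => if p = tip then 0 else D p with hD₀
      have hsupp₀ : ∀ j : Fin a, k ≤ (j : ℕ) → D₀ (Sum.inr j) = 0 := by
        intro j hj
        rcases eq_or_ne ((j : ℕ)) k with hjk | hjk
        · have : Sum.inr j = tip := by
            rw [htipval]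
            congr 1
            exact Fin.ext hjk
          simp [hD₀, this]
        · have hj1 : k + 1 ≤ (j : ℕ) := by omega
          have hne : (Sum.inr j : V ⊕ Fin a) ≠ tip := by
            rw [htipval]
            intro hcon
            apply hjk
            simpa using congrArg Fin.val (Sum.inr.inj hcon)
          simp [hD₀, hne, hsupp j hj1]
      have htot : pebTotal D = pebTotal D₀ + s0 := by
        unfold pebTotal
        have key : ∀ p, D p = D₀ p + (if p = tip then s0 else 0) := by
          intro p
          rcases eq_or_ne p tip with rfl | hp
          · simp [hD₀, hs0]
          · simp [hD₀, hp]
        rw [Finset.sum_congr rfl (fun p _ => key p), Finset.sum_add_distrib]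
        simp [Finset.sum_ite_eq']
      -- arithmetic step
      have harith : peb G (unitDist (2 * (t - s0) * 2 ^ k) x) ≤ (pebTotal D₀ : ℕ∞) := by
        have h1 : peb G (unitDist ((t - s0) * 2 ^ (k+1)) x) + ((s0 * 2 ^ k : ℕ) : ℕ∞)
            ≤ peb G (unitDist ((t - s0) * 2 ^ (k+1) + 2 * (s0 * 2 ^ k)) x) := peb_add_le _
        have heq1 : (t - s0) * 2 ^ (k+1) + 2 * (s0 * 2 ^ k) = t * 2 ^ (k+1) := by
          have h7 : t - s0 + s0 = t := Nat.sub_add_cancel (le_of_lt hst)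
          have h8 : 2 ^ (k+1) = 2 * 2 ^ k := by ring
          rw [h8]
          calc (t - s0) * (2 * 2 ^ k) + 2 * (s0 * 2 ^ k)
              = ((t - s0) + s0) * (2 * 2 ^ k) := by ring
            _ = t * (2 * 2 ^ k) := by rw [h7]
        rw [heq1] at h1
        have h2 : peb G (unitDist ((t - s0) * 2 ^ (k+1)) x) + ((s0 : ℕ) : ℕ∞)
            ≤ peb G (unitDist (t * 2 ^ (k+1)) x) := by
          refine le_trans ?_ h1
          apply add_le_add_right
          exact_mod_cast Nat.le_mul_of_pos_right s0 (Nat.pow_pos (n := k) (by omega))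
        have h3 : peb G (unitDist ((t - s0) * 2 ^ (k+1)) x) + ((s0 : ℕ) : ℕ∞)
            ≤ (pebTotal D₀ : ℕ∞) + ((s0 : ℕ) : ℕ∞) := by
          refine le_trans h2 (le_trans hpeb ?_)
          rw [htot]
          push_cast
          exact le_refl _
        have h4 := (WithTop.add_le_add_iff_right (by simp : ((s0 : ℕ) : ℕ∞) ≠ ⊤)).mp h3
        have heq2 : 2 * (t - s0) * 2 ^ k = (t - s0) * 2 ^ (k+1) := by ring
        rw [heq2]
        exact h4
      have hreach₀ := ih (by omega) (2 * (t - s0)) D₀ hsupp₀ harith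
      obtain ⟨E, hrtg, hE⟩ := hreach₀
      -- add back the s0 pebbles at tip
      have hDsplit : D = fun p => D₀ p + (if p = tip then s0 else 0) := by
        funext p
        rcases eq_or_ne p tip with rfl | hp
        · simp [hD₀, hs0]
        · simp [hD₀, hp]
      have hrtg2 : Relation.ReflTransGen (PebMove (pathExt G x a)) D
          (fun p => E p + (if p = tip then s0 else 0)) := by
        rw [hDsplit]
        exact rtg_add hrtg _
      set E' : (V ⊕ Fin a) → ℕ := fun p => E p + (if p = tip then s0 else 0) with hE'
      have hadj : (pathExt G x a).Adj (wv x a k) tip := by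
        rw [htip]; exact wv_adj hka
      have hwkne : wv x a k ≠ tip := hadj.ne
      have hE'wk : 2 * (t - s0) ≤ E' (wv x a k) := by
        have h5 := hE (wv x a k)
        simp [unitDist] at h5
        simp [hE', hwkne]
        omega
      have hmoves := rtg_moves hadj (t - s0) E' hE'wk
      refine ⟨_, hrtg2.trans hmoves, ?_⟩
      intro p
      rcases eq_or_ne p tip with rfl | hp
      · have hs0le : s0 ≤ E' tip := by simp [hE']
        simp [unitDist, Ne.symm hwkne]
        omega
      · simp [unitDist, hp]

end Qprime

section PathPeb

variable {V : Type*} [Fintype V] [DecidableEq V]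

lemma pathExt_peb_le (G : SimpleGraph V) (x : V) (a : ℕ) :
    peb (pathExt G x a) (unitDist 1 (wv x a a)) ≤ peb G (unitDist (2 ^ a) x) := by
  apply peb_le_intro
  intro D hD
  have := Qprime G x a a (le_refl a) 1 D
    (fun j hj => absurd j.isLt (by omega))
    (by simpa using hD)
  exact this

end PathPeb

section Weight

variable {V V' : Type*} [DecidableEq V] [DecidableEq V'] [Fintype V']
variable {G : SimpleGraph V} {G' : SimpleGraph V'}

def Wt (φ : V' → V) (ω : V' → ℕ) (B : V' → ℕ) : V → ℕ :=
  fun g => ∑ p : V', (if φ p = g then ω p * B p else 0)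

lemma wt_move_eq (φ : V' → V) (ω : V' → ℕ) {B : V' → ℕ} {u' v' : V'}
    (hne : u' ≠ v') (h2 : 2 ≤ B u') (g : V) :
    Wt φ ω (fun w => if w = u' then B u' - 2 else if w = v' then B v' + 1 else B w) g
      + 2 * ω u' * (if φ u' = g then 1 else 0)
      = Wt φ ω B g + ω v' * (if φ v' = g then 1 else 0) := by
  have key : ∀ p : V', (if φ p = g then ω p * (if p = u' then B u' - 2 else if p = v' then B v' + 1 else B p) else 0)
      + (if p = u' then 2 * ω u' * (if φ u' = g then 1 else 0) else 0)
      = (if φ p = g then ω p * B p else 0)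
      + (if p = v' then ω v' * (if φ v' = g then 1 else 0) else 0) := by
    intro p
    rcases eq_or_ne p u' with rfl | hpu
    · rw [if_pos rfl, if_pos rfl, if_neg hne]
      rcases eq_or_ne (φ p) g with he | he
      · rw [if_pos he, if_pos he, if_pos he]
        have hsub : B p - 2 + 2 = B p := by omega
        calc ω p * (B p - 2) + 2 * ω p * 1 = ω p * ((B p - 2) + 2) := by ring
          _ = ω p * B p := by rw [hsub]
          _ = ω p * B p + 0 := by omega
      · rw [if_neg he, if_neg he, if_neg he]
        ring
    · rcases eq_or_ne p v' with rfl | hpv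
      · rw [if_neg hpu, if_pos rfl, if_neg hpu, if_pos rfl]
        rcases eq_or_ne (φ p) g with he | he
        · rw [if_pos he, if_pos he, if_pos he]
          ring
        · rw [if_neg he, if_neg he, if_neg he]
          ring
      · rw [if_neg hpu, if_neg hpv, if_neg hpu, if_neg hpv]
  have hsum := Finset.sum_congr rfl (fun p (_ : p ∈ Finset.univ) => key p)
  rw [Finset.sum_add_distrib, Finset.sum_add_distrib] at hsum
  simpa [Wt, Finset.sum_ite_eq'] using hsum

lemma wt_single_le (φ : V' → V) (ω : V' → ℕ) (B : V' → ℕ) (p0 : V') {g : V}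
    (hφ : φ p0 = g) : ω p0 * B p0 ≤ Wt φ ω B g := by
  show ω p0 * B p0 ≤ ∑ p : V', (if φ p = g then ω p * B p else 0)
  calc ω p0 * B p0 = (if φ p0 = g then ω p0 * B p0 else 0) := by rw [if_pos hφ]
    _ ≤ ∑ p : V', (if φ p = g then ω p * B p else 0) :=
        Finset.single_le_sum (f := fun p : V' => if φ p = g then ω p * B p else 0)
          (fun i _ => Nat.zero_le _) (Finset.mem_univ p0)

lemma wt_sim (φ : V' → V) (ω : V' → ℕ)
    (hcond : ∀ u' v', G'.Adj u' v' →
      (φ u' = φ v' ∧ ω v' ≤ 2 * ω u') ∨ (G.Adj (φ u') (φ v') ∧ ω v' = ω u'))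
    {B B₁ : V' → ℕ} (h : Relation.ReflTransGen (PebMove G') B B₁) :
    ∀ A : V → ℕ, (∀ g, Wt φ ω B g ≤ A g) →
      ∃ A₁, Relation.ReflTransGen (PebMove G) A A₁ ∧ ∀ g, Wt φ ω B₁ g ≤ A₁ g := by
  induction h with
  | refl => exact fun A hA => ⟨A, .refl, hA⟩
  | @tail c d hs hstep ih =>
    intro A hA
    obtain ⟨A', hA'rtg, hA'⟩ := ih A hA
    obtain ⟨u', v', huv, h2, rfl⟩ := hstep
    have hne : u' ≠ v' := huv.ne
    have hkey := wt_move_eq φ ω hne h2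
    rcases hcond _ _ huv with ⟨heq, hle⟩ | ⟨hadj, hωeq⟩
    · refine ⟨A', hA'rtg, fun g => ?_⟩
      have h1 := hkey g
      have h3 := hA' g
      rcases eq_or_ne (φ u') g with he | he
      · rw [if_pos he, if_pos (heq ▸ he)] at h1
        omega
      · rw [if_neg he, if_neg (heq ▸ he)] at h1
        omega
    · by_cases hn : ω u' = 0
      · refine ⟨A', hA'rtg, fun g => ?_⟩
        have h1 := hkey g
        have h3 := hA' g
        rw [hn, hωeq, hn] at h1
        omega
      · have hφne : φ u' ≠ φ v' := hadj.ne
        have hAu : 2 * ω u' ≤ A' (φ u') := by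
          have hterm : ω u' * c u' ≤ Wt φ ω c (φ u') := wt_single_le φ ω c u' rfl
          have h3 := hA' (φ u')
          have : 2 * ω u' ≤ ω u' * c u' := by
            calc 2 * ω u' = ω u' * 2 := by ring
              _ ≤ ω u' * c u' := Nat.mul_le_mul_left _ h2
          omega
        refine ⟨_, hA'rtg.trans (rtg_moves hadj (ω u') A' hAu), fun g => ?_⟩
        have h1 := hkey g
        have h3 := hA' g
        rcases eq_or_ne g (φ u') with rfl | hg1
        · rw [if_pos rfl, if_neg (Ne.symm hφne)] at h1
          rw [if_pos rfl]
          omega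
        · rcases eq_or_ne g (φ v') with rfl | hg2
          · rw [if_neg (fun e => hg1 e.symm), if_pos rfl] at h1
            rw [if_neg (fun e => hg1 e), if_pos rfl]
            omega
          · rw [if_neg (fun e => hg1 e.symm), if_neg (fun e => hg2 e.symm)] at h1
            rw [if_neg hg1, if_neg hg2]
            omega

end Weight

section MainAux

variable {V : Type*}

def psi (x : V) {a : ℕ} : V ⊕ Fin a → V := Sum.elim id (fun _ => x)

def dep {a : ℕ} : V ⊕ Fin a → ℕ := Sum.elim (fun _ => 0) (fun i => (i : ℕ) + 1)

@[simp] lemma psi_inl (x u : V) {a : ℕ} : psi x (Sum.inl u : V ⊕ Fin a) = u := rfl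
@[simp] lemma psi_inr (x : V) {a : ℕ} (i : Fin a) : psi x (Sum.inr i : V ⊕ Fin a) = x := rfl
@[simp] lemma dep_inl (u : V) {a : ℕ} : dep (Sum.inl u : V ⊕ Fin a) = 0 := rfl
@[simp] lemma dep_inr {a : ℕ} (i : Fin a) : dep (Sum.inr i : V ⊕ Fin a) = (i : ℕ) + 1 := rfl

lemma psi_wv (x : V) (a k : ℕ) : psi x (wv x a k) = x := by
  unfold wv
  split_ifs <;> rfl

lemma dep_wv_self (x : V) (a : ℕ) : dep (wv x a a) = a := by
  unfold wv
  split_ifs with h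
  · show (a - 1) + 1 = a
    omega
  · show 0 = a
    omega

lemma two_pow_le {m n : ℕ} (h : m ≤ n + 1) : (2:ℕ) ^ m ≤ 2 * 2 ^ n := by
  calc (2:ℕ) ^ m ≤ 2 ^ (n + 1) := Nat.pow_le_pow_right (by omega) h
    _ = 2 * 2 ^ n := by rw [pow_succ]; ring

end MainAux


open SimpleGraph in
/-- The Graham-type inequality for single target vertices is equivalent to the
family of inequalities for powers of two. -/
theorem one_iff_powers_of_two :
    (∀ (V W : Type) [Fintype V] [DecidableEq V] [Fintype W] [DecidableEq W]
        (G : SimpleGraph V) (H : SimpleGraph W) (x : V) (y : W),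
        peb (G □ H) (unitDist 1 (x, y))
          ≤ peb G (unitDist 1 x) * peb H (unitDist 1 y)) ↔
    (∀ (V W : Type) [Fintype V] [DecidableEq V] [Fintype W] [DecidableEq W]
        (G : SimpleGraph V) (H : SimpleGraph W) (a b : ℕ) (x : V) (y : W),
        peb (G □ H) (unitDist (2 ^ (a + b)) (x, y))
          ≤ peb G (unitDist (2 ^ a) x) * peb H (unitDist (2 ^ b) y)) := by
  constructor
  · intro h1 V W _ _ _ _ G H a b x y
    have hCG : peb (pathExt G x a) (unitDist 1 (wv x a a)) ≤ peb G (unitDist (2 ^ a) x) :=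
      pathExt_peb_le G x a
    have hCH : peb (pathExt H y b) (unitDist 1 (wv y b b)) ≤ peb H (unitDist (2 ^ b) y) :=
      pathExt_peb_le H y b
    have hB := h1 (V ⊕ Fin a) (W ⊕ Fin b) (pathExt G x a) (pathExt H y b) (wv x a a) (wv y b b)
    have hA : peb (G □ H) (unitDist (2 ^ (a + b)) (x, y))
        ≤ peb ((pathExt G x a) □ (pathExt H y b)) (unitDist 1 (wv x a a, wv y b b)) := by
      apply peb_le_intro
      intro D hD
      set ρ : (V ⊕ Fin a) × (W ⊕ Fin b) → Option (V × W) := fun p =>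
        match p.1, p.2 with
        | Sum.inl u, Sum.inl v => some (u, v)
        | _, _ => none with hρ
      have htot : pebTotal (pushD ρ D) = pebTotal D := by
        unfold pebTotal pushD
        conv_rhs => rw [Fintype.sum_prod_type]
        rw [Fintype.sum_prod_type, Fintype.sum_sum_type]
        have hz : (∑ i : Fin a, ∑ p2 : W ⊕ Fin b, ((ρ (Sum.inr i, p2)).elim 0 D)) = 0 := by
          apply Finset.sum_eq_zero
          intro i _
          apply Finset.sum_eq_zero
          rintro (v | j) _ <;> simp [hρ]
        rw [hz, add_zero]
        apply Finset.sum_congr rfl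
        intro u _
        rw [Fintype.sum_sum_type]
        have hz2 : (∑ j : Fin b, ((ρ (Sum.inl u, Sum.inr j)).elim 0 D)) = 0 := by
          apply Finset.sum_eq_zero
          intro j _
          simp [hρ]
        rw [hz2, add_zero]
        apply Finset.sum_congr rfl
        intro v _
        simp [hρ]
      have hreach : Reaches ((pathExt G x a) □ (pathExt H y b)) (pushD ρ D)
          (unitDist 1 (wv x a a, wv y b b)) := by
        apply peb_spec
        rw [htot]
        exact hD
      obtain ⟨B, hBrtg, hBge⟩ := hreach
      have hcond : ∀ p q : (V ⊕ Fin a) × (W ⊕ Fin b),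
          ((pathExt G x a) □ (pathExt H y b)).Adj p q →
          ((fun r : (V ⊕ Fin a) × (W ⊕ Fin b) => (psi x r.1, psi y r.2)) p
              = (fun r : (V ⊕ Fin a) × (W ⊕ Fin b) => (psi x r.1, psi y r.2)) q
            ∧ (fun r : (V ⊕ Fin a) × (W ⊕ Fin b) => 2 ^ (dep r.1 + dep r.2)) q
              ≤ 2 * (fun r : (V ⊕ Fin a) × (W ⊕ Fin b) => 2 ^ (dep r.1 + dep r.2)) p)
          ∨ ((G □ H).Adj ((fun r : (V ⊕ Fin a) × (W ⊕ Fin b) => (psi x r.1, psi y r.2)) p)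
                ((fun r : (V ⊕ Fin a) × (W ⊕ Fin b) => (psi x r.1, psi y r.2)) q)
            ∧ (fun r : (V ⊕ Fin a) × (W ⊕ Fin b) => 2 ^ (dep r.1 + dep r.2)) q
              = (fun r : (V ⊕ Fin a) × (W ⊕ Fin b) => 2 ^ (dep r.1 + dep r.2)) p) := by
        rintro ⟨p1, p2⟩ ⟨q1, q2⟩ hadj
        rw [SimpleGraph.boxProd_adj] at hadj
        rcases hadj with ⟨h1', h2'⟩ | ⟨h1', h2'⟩
        · dsimp at h1' h2' ⊢
          subst h2'
          rcases p1 with u | i <;> rcases q1 with v | j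
          · right
            have hG : G.Adj u v := h1'
            exact ⟨SimpleGraph.boxProd_adj.mpr (Or.inl ⟨hG, rfl⟩), by simp⟩
          · left
            have hx : u = x ∧ ((j : ℕ) = 0) := h1'
            obtain ⟨rfl, hj⟩ := hx
            refine ⟨by simp, ?_⟩
            apply two_pow_le
            simp
            omega
          · left
            have hx : v = x ∧ ((i : ℕ) = 0) := h1'
            obtain ⟨rfl, hi⟩ := hx
            refine ⟨by simp, ?_⟩
            apply two_pow_le
            simp
            omega
          · left
            have hx : (i : ℕ) + 1 = j ∨ (j : ℕ) + 1 = i := h1'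
            refine ⟨by simp, ?_⟩
            apply two_pow_le
            simp
            omega
        · dsimp at h1' h2' ⊢
          subst h2'
          rcases p2 with u | i <;> rcases q2 with v | j
          · right
            have hH : H.Adj u v := h1'
            exact ⟨SimpleGraph.boxProd_adj.mpr (Or.inr ⟨hH, rfl⟩), by simp⟩
          · left
            have hx : u = y ∧ ((j : ℕ) = 0) := h1'
            obtain ⟨rfl, hj⟩ := hx
            refine ⟨by simp, ?_⟩
            apply two_pow_le
            simp
            omega
          · left
            have hx : v = y ∧ ((i : ℕ) = 0) := h1'
            obtain ⟨rfl, hi⟩ := hx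
            refine ⟨by simp, ?_⟩
            apply two_pow_le
            simp
            omega
          · left
            have hx : (i : ℕ) + 1 = j ∨ (j : ℕ) + 1 = i := h1'
            refine ⟨by simp, ?_⟩
            apply two_pow_le
            simp
            omega
      have hW0 : ∀ g : V × W,
          Wt (fun r : (V ⊕ Fin a) × (W ⊕ Fin b) => (psi x r.1, psi y r.2))
             (fun r : (V ⊕ Fin a) × (W ⊕ Fin b) => 2 ^ (dep r.1 + dep r.2))
             (pushD ρ D) g ≤ D g := by
        rintro ⟨g1, g2⟩
        apply le_of_eq
        unfold Wt pushD
        rw [Fintype.sum_prod_type, Fintype.sum_sum_type]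
        have hz : (∑ i : Fin a, ∑ p2 : W ⊕ Fin b,
            (if (psi x (Sum.inr i : V ⊕ Fin a), psi y p2) = (g1, g2)
              then 2 ^ (dep (Sum.inr i : V ⊕ Fin a) + dep p2) * ((ρ (Sum.inr i, p2)).elim 0 D)
              else 0)) = 0 := by
          apply Finset.sum_eq_zero
          intro i _
          apply Finset.sum_eq_zero
          rintro (v | j) _ <;> simp [hρ]
        rw [hz, add_zero]
        have hu : ∀ u : V, (∑ p2 : W ⊕ Fin b,
            (if (psi x (Sum.inl u : V ⊕ Fin a), psi y p2) = (g1, g2)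
              then 2 ^ (dep (Sum.inl u : V ⊕ Fin a) + dep p2) * ((ρ (Sum.inl u, p2)).elim 0 D)
              else 0)) = (if u = g1 then D (u, g2) else 0) := by
          intro u
          rw [Fintype.sum_sum_type]
          have hz2 : (∑ j : Fin b,
              (if (psi x (Sum.inl u : V ⊕ Fin a), psi y (Sum.inr j : W ⊕ Fin b)) = (g1, g2)
                then 2 ^ (dep (Sum.inl u : V ⊕ Fin a) + dep (Sum.inr j : W ⊕ Fin b))
                  * ((ρ (Sum.inl u, Sum.inr j)).elim 0 D)
                else 0)) = 0 := by
            apply Finset.sum_eq_zero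
            intro j _
            simp [hρ]
          rw [hz2, add_zero]
          have hterm : ∀ v : W,
              (if (psi x (Sum.inl u : V ⊕ Fin a), psi y (Sum.inl v : W ⊕ Fin b)) = (g1, g2)
                then 2 ^ (dep (Sum.inl u : V ⊕ Fin a) + dep (Sum.inl v : W ⊕ Fin b))
                  * ((ρ (Sum.inl u, Sum.inl v)).elim 0 D)
                else 0)
              = (if u = g1 then (if v = g2 then D (u, v) else 0) else 0) := by
            intro v
            rcases eq_or_ne u g1 with rfl | hu1
            · rcases eq_or_ne v g2 with rfl | hv1
              · simp [hρ]
              · simp [hρ, hv1, Prod.ext_iff]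
            · simp [hρ, hu1, Prod.ext_iff]
          rw [Finset.sum_congr rfl (fun v _ => hterm v)]
          rcases eq_or_ne u g1 with rfl | hu1
          · simp [Finset.sum_ite_eq']
          · simp [hu1]
        rw [Finset.sum_congr rfl (fun u _ => hu u)]
        simp [Finset.sum_ite_eq']
      obtain ⟨A₁, hArtg, hge⟩ := wt_sim
        (fun r : (V ⊕ Fin a) × (W ⊕ Fin b) => (psi x r.1, psi y r.2))
        (fun r : (V ⊕ Fin a) × (W ⊕ Fin b) => 2 ^ (dep r.1 + dep r.2))
        hcond hBrtg D hW0
      refine ⟨A₁, hArtg, ?_⟩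
      intro v
      rcases eq_or_ne v (x, y) with rfl | hv
      · have hφtip : (fun r : (V ⊕ Fin a) × (W ⊕ Fin b) => (psi x r.1, psi y r.2))
            (wv x a a, wv y b b) = (x, y) := by
          simp [psi_wv]
        have h1' := wt_single_le
          (fun r : (V ⊕ Fin a) × (W ⊕ Fin b) => (psi x r.1, psi y r.2))
          (fun r : (V ⊕ Fin a) × (W ⊕ Fin b) => 2 ^ (dep r.1 + dep r.2))
          B (wv x a a, wv y b b) hφtip
        have h2' : 1 ≤ B (wv x a a, wv y b b) := by
          have h3' := hBge (wv x a a, wv y b b)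
          simpa [unitDist] using h3'
        have h3' := hge (x, y)
        have h4' : 2 ^ (a + b) ≤ 2 ^ (dep (wv x a a) + dep (wv y b b)) * B (wv x a a, wv y b b) := by
          rw [dep_wv_self, dep_wv_self]
          calc 2 ^ (a + b) = 2 ^ (a + b) * 1 := by ring
            _ ≤ 2 ^ (a + b) * B (wv x a a, wv y b b) := Nat.mul_le_mul_left _ h2'
        have h5' : 2 ^ (a + b) ≤ A₁ (x, y) := le_trans h4' (le_trans h1' h3')
        simpa [unitDist] using h5'
      · simp [unitDist, hv]
    exact le_trans hA (le_trans hB (mul_le_mul' hCG hCH))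
  · intro h2 V W _ _ _ _ G H x y
    have := h2 V W G H 0 0 x y
    simpa using this
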